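/- If a pomset language L is recognizable by a pomset recognizer, then the syntactic equivalence ∼_L (defined by u ∼_L v iff for all 1-contexts c, c[u] ∈ L ⟺ c[v] ∈ L) is a congruence with respect to sequential and parallel composition and has finitely many equivalence classes. -/
import Mathlib


/-- Syntactic terms for series-parallel pomsets over alphabet `σ`. -/
inductive SPTerm (σ : Type) : Type
  | eps : SPTerm σ
  | letter (a : σ) : SPTerm σ
  | seq (t u : SPTerm σ) : SPTerm σ
  | par (t u : SPTerm σ) : SPTerm σ

/-- Semantic equality of terms: the congruence generated by associativity of
both compositions, commutativity of `par`, and neutrality of `eps`.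
By freeness of SP in the variety of bimonoids, two terms denote the same
series-parallel pomset iff they are related by this relation. -/
inductive SPEquiv {σ : Type} : SPTerm σ → SPTerm σ → Prop
  | refl (t) : SPEquiv t t
  | symm {t u} : SPEquiv t u → SPEquiv u t
  | trans {t u v} : SPEquiv t u → SPEquiv u v → SPEquiv t v
  | seq_congr {t t' u u'} : SPEquiv t t' → SPEquiv u u' → SPEquiv (.seq t u) (.seq t' u')
  | par_congr {t t' u u'} : SPEquiv t t' → SPEquiv u u' → SPEquiv (.par t u) (.par t' u')
  | seq_assoc (t u v) : SPEquiv (.seq (.seq t u) v) (.seq t (.seq u v))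
  | par_assoc (t u v) : SPEquiv (.par (.par t u) v) (.par t (.par u v))
  | par_comm (t u) : SPEquiv (.par t u) (.par u t)
  | seq_eps_left (t) : SPEquiv (.seq .eps t) t
  | seq_eps_right (t) : SPEquiv (.seq t .eps) t
  | par_eps (t) : SPEquiv (.par t .eps) t

def SPSetoid (σ : Type) : Setoid (SPTerm σ) :=
  ⟨SPEquiv, ⟨SPEquiv.refl, SPEquiv.symm, SPEquiv.trans⟩⟩

/-- Series-parallel pomsets over `σ`. -/
def SP (σ : Type) : Type := Quotient (SPSetoid σ)

def SP.mk {σ : Type} (t : SPTerm σ) : SP σ := Quotient.mk (SPSetoid σ) t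

/-- The empty pomset ε. -/
def SP.eps {σ : Type} : SP σ := SP.mk .eps

/-- The singleton pomset labelled by `a`. -/
def SP.letter {σ : Type} (a : σ) : SP σ := SP.mk (.letter a)

/-- Sequential composition of series-parallel pomsets. -/
def SP.seq {σ : Type} : SP σ → SP σ → SP σ :=
  Quotient.map₂ SPTerm.seq (fun _ _ h _ _ h' => SPEquiv.seq_congr h h')

/-- Parallel composition of series-parallel pomsets. -/
def SP.par {σ : Type} : SP σ → SP σ → SP σ :=
  Quotient.map₂ SPTerm.par (fun _ _ h _ _ h' => SPEquiv.par_congr h h')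

/-- A bimonoid structure on `M`: two associative operations, `par`
additionally commutative, sharing the neutral element `one`. -/
structure BimonoidStr (M : Type) where
  seq : M → M → M
  par : M → M → M
  one : M
  seq_assoc : ∀ a b c, seq (seq a b) c = seq a (seq b c)
  par_assoc : ∀ a b c, par (par a b) c = par a (par b c)
  par_comm : ∀ a b, par a b = par b a
  seq_one : ∀ a, seq a one = a
  one_seq : ∀ a, seq one a = a
  par_one : ∀ a, par a one = a

/-- Evaluation of a term in a bimonoid, extending `i : σ → M`. -/
def termEval {σ M : Type} (str : BimonoidStr M) (i : σ → M) : SPTerm σ → M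
  | .eps => str.one
  | .letter a => i a
  | .seq t u => str.seq (termEval str i t) (termEval str i u)
  | .par t u => str.par (termEval str i t) (termEval str i u)

theorem termEval_congr {σ M : Type} (str : BimonoidStr M) (i : σ → M)
    {t u : SPTerm σ} (h : SPEquiv t u) : termEval str i t = termEval str i u := by
  induction h with
  | refl => rfl
  | symm _ ih => exact ih.symm
  | trans _ _ ih1 ih2 => exact ih1.trans ih2
  | seq_congr _ _ ih1 ih2 => simp only [termEval, ih1, ih2]
  | par_congr _ _ ih1 ih2 => simp only [termEval, ih1, ih2]
  | seq_assoc t u v => simp only [termEval]; exact str.seq_assoc _ _ _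
  | par_assoc t u v => simp only [termEval]; exact str.par_assoc _ _ _
  | par_comm t u => simp only [termEval]; exact str.par_comm _ _
  | seq_eps_left t => simp only [termEval]; exact str.one_seq _
  | seq_eps_right t => simp only [termEval]; exact str.seq_one _
  | par_eps t => simp only [termEval]; exact str.par_one _

/-- A pomset recognizer with state set `M`: a finite bimonoid together with
an interpretation of letters and a set of accepting states. -/
structure Recognizer (σ M : Type) where
  fin : Finite M
  str : BimonoidStr M
  i : σ → M
  F : Set M

/-- The unique homomorphic extension of `R.i` to series-parallel pomsets. -/
def Recognizer.eval {σ M : Type} (R : Recognizer σ M) : SP σ → M :=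
  Quotient.lift (termEval R.str R.i) (fun _ _ h => termEval_congr R.str R.i h)

/-- `R` accepts the pomset `w`. -/
def Recognizer.accepts {σ M : Type} (R : Recognizer σ M) (w : SP σ) : Prop :=
  R.eval w ∈ R.F

/-- The language of a recognizer. -/
def Recognizer.lang {σ M : Type} (R : Recognizer σ M) : Set (SP σ) :=
  {w | R.accepts w}

/-- 1-contexts: series-parallel pomsets with exactly one placeholder □. -/
inductive Ctx (σ : Type) : Type
  | hole : Ctx σ
  | seqL (c : Ctx σ) (w : SP σ) : Ctx σ
  | seqR (w : SP σ) (c : Ctx σ) : Ctx σ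
  | parL (c : Ctx σ) (w : SP σ) : Ctx σ
  | parR (w : SP σ) (c : Ctx σ) : Ctx σ

/-- Substitution of a pomset for the placeholder of a context: `c[z]`. -/
def Ctx.app {σ : Type} : Ctx σ → SP σ → SP σ
  | .hole, z => z
  | .seqL c w, z => SP.seq (c.app z) w
  | .seqR w c, z => SP.seq w (c.app z)
  | .parL c w, z => SP.par (c.app z) w
  | .parR w c, z => SP.par w (c.app z)

/-- Syntactic equivalence of a pomset language: `u ∼_L v` iff no 1-context
separates `u` and `v` with respect to membership in `L`. -/
def SynEq {σ : Type} (L : Set (SP σ)) (u v : SP σ) : Prop :=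
  ∀ c : Ctx σ, c.app u ∈ L ↔ c.app v ∈ L

def synSetoid {σ : Type} (L : Set (SP σ)) : Setoid (SP σ) :=
  ⟨SynEq L, ⟨fun _ _ => Iff.rfl, fun h c => (h c).symm, fun h1 h2 c => (h1 c).trans (h2 c)⟩⟩

/-- Composition of contexts. -/
def Ctx.comp {σ : Type} : Ctx σ → Ctx σ → Ctx σ
  | .hole, d => d
  | .seqL c w, d => .seqL (c.comp d) w
  | .seqR w c, d => .seqR w (c.comp d)
  | .parL c w, d => .parL (c.comp d) w
  | .parR w c, d => .parR w (c.comp d)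

theorem Ctx.comp_app {σ : Type} (c d : Ctx σ) (z : SP σ) :
    (c.comp d).app z = c.app (d.app z) := by
  induction c with
  | hole => rfl
  | seqL c w ih => simp [Ctx.comp, Ctx.app, ih]
  | seqR w c ih => simp [Ctx.comp, Ctx.app, ih]
  | parL c w ih => simp [Ctx.comp, Ctx.app, ih]
  | parR w c ih => simp [Ctx.comp, Ctx.app, ih]

theorem Recognizer.eval_seq {σ M : Type} (R : Recognizer σ M) (u v : SP σ) :
    R.eval (SP.seq u v) = R.str.seq (R.eval u) (R.eval v) := by
  induction u using Quotient.ind; induction v using Quotient.ind; rfl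

theorem Recognizer.eval_par {σ M : Type} (R : Recognizer σ M) (u v : SP σ) :
    R.eval (SP.par u v) = R.str.par (R.eval u) (R.eval v) := by
  induction u using Quotient.ind; induction v using Quotient.ind; rfl

theorem eval_ctx_congr {σ M : Type} (R : Recognizer σ M) {u v : SP σ}
    (h : R.eval u = R.eval v) (c : Ctx σ) : R.eval (c.app u) = R.eval (c.app v) := by
  induction c with
  | hole => exact h
  | seqL c w ih => simp [Ctx.app, R.eval_seq, ih]
  | seqR w c ih => simp [Ctx.app, R.eval_seq, ih]
  | parL c w ih => simp [Ctx.app, R.eval_par, ih]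
  | parR w c ih => simp [Ctx.app, R.eval_par, ih]

theorem eval_eq_synEq {σ M : Type} {L : Set (SP σ)} (R : Recognizer σ M)
    (hR : ∀ w, w ∈ L ↔ R.accepts w) {u v : SP σ}
    (h : R.eval u = R.eval v) : SynEq L u v := fun c => by
  rw [hR, hR, Recognizer.accepts, Recognizer.accepts, eval_ctx_congr R h c]

/-- if `L` is recognizable by a pomset recognizer then `∼_L` is a
congruence w.r.t. sequential and parallel composition with finitely many classes. -/
theorem recognizable_syn_congruence_finite {σ M : Type} (L : Set (SP σ))
    (R : Recognizer σ M) (hR : ∀ w, w ∈ L ↔ R.accepts w) :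
    (∀ u u' v v', SynEq L u u' → SynEq L v v' →
      SynEq L (SP.seq u v) (SP.seq u' v') ∧ SynEq L (SP.par u v) (SP.par u' v')) ∧
    Finite (Quotient (synSetoid L)) := by
  constructor
  · intro u u' v v' hu hv
    constructor
    · intro c
      have h1 := hu (c.comp (.seqL .hole v))
      have h2 := hv (c.comp (.seqR u' .hole))
      simp only [Ctx.comp_app, Ctx.app] at h1 h2
      exact h1.trans h2
    · intro c
      have h1 := hu (c.comp (.parL .hole v))
      have h2 := hv (c.comp (.parR u' .hole))
      simp only [Ctx.comp_app, Ctx.app] at h1 h2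
      exact h1.trans h2
  · have : Finite M := R.fin
    have hsurj : Function.Surjective
        (fun m : Set.range R.eval => Quotient.mk (synSetoid L) m.2.choose) := by
      intro q
      induction q using Quotient.ind with
      | _ w =>
        refine ⟨⟨R.eval w, ⟨w, rfl⟩⟩, ?_⟩
        refine Quotient.sound (eval_eq_synEq R hR ?_)
        exact (⟨w, rfl⟩ : R.eval w ∈ Set.range R.eval).choose_spec
    exact Finite.of_surjective _ hsurj
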